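/- Let k ≥ 1 and l ≥ 0, and let M be the direct sum of the uniform matroid U_{1,k+1} and the uniform matroid U_{0,l} (that is, a rank-1 matroid on k+1 parallel elements together with l loops). Then T_M is convex along the portions of the lines x+y=p lying in the positive quadrant. -/
import Mathlib


open Matroid Set

variable {α : Type*}

/-- The rank of a set `X` in a matroid `M`:
the maximum size of an independent subset of `X`. -/
noncomputable def Matroid.rankSet (M : Matroid α) (X : Set α) : ℕ :=
  sSup {n | ∃ I ⊆ X, M.Indep I ∧ I.ncard = n}

/-- The Tutte polynomial of a matroid `M` on a finite type, evaluated at `(x, y) : ℝ × ℝ`: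
`T_M(x,y) = Σ_{A ⊆ E} (x−1)^{r(E)−r(A)} · (y−1)^{|A|−r(A)}`. -/
noncomputable def Matroid.tutte [Fintype α] (M : Matroid α) (x y : ℝ) : ℝ :=
  ∑ A ∈ M.E.toFinite.toFinset.powerset,
    (x - 1) ^ (M.rankSet M.E - M.rankSet ↑A) * (y - 1) ^ (A.card - M.rankSet ↑A)

/-- `T_M` is convex along the portions of the lines `x + y = p` lying in the
positive quadrant. -/
def Matroid.TutteConvexOnLines [Fintype α] (M : Matroid α) : Prop :=
  ∀ t x₁ y₁ x₂ y₂ : ℝ, 0 ≤ t → t ≤ 1 → 0 ≤ x₁ → 0 ≤ y₁ → 0 ≤ x₂ → 0 ≤ y₂ →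
    x₁ + y₁ = x₂ + y₂ →
    M.tutte (t * x₁ + (1 - t) * x₂) (t * y₁ + (1 - t) * y₂) ≤
      t * M.tutte x₁ y₁ + (1 - t) * M.tutte x₂ y₂

private lemma sum_pow_card'' {β : Type*} [DecidableEq β] (s : Finset β) (z : ℝ) :
    ∑ C ∈ s.powerset, z ^ C.card = (z + 1) ^ s.card := by
  induction s using Finset.induction_on with
  | empty => simp
  | @insert a s ha ih =>
    have hdisj : Disjoint s.powerset (s.powerset.image (insert a)) := by
      rw [Finset.disjoint_left]
      rintro B hB hB'
      obtain ⟨C, hC, rfl⟩ := Finset.mem_image.1 hB'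
      exact ha (Finset.mem_powerset.1 hB (Finset.mem_insert_self a C))
    rw [Finset.powerset_insert, Finset.sum_union hdisj, Finset.sum_image (by
      intro x hx y hy h
      have hax : a ∉ x := fun h' => ha (Finset.mem_powerset.1 hx h')
      have hay : a ∉ y := fun h' => ha (Finset.mem_powerset.1 hy h')
      rw [← Finset.erase_insert hax, h, Finset.erase_insert hay])]
    have : ∀ C ∈ s.powerset, z ^ (insert a C).card = z * z ^ C.card := by
      intro C hC
      rw [Finset.card_insert_of_notMem (fun h' => ha (Finset.mem_powerset.1 hC h')), pow_succ]
      ring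
    rw [Finset.sum_congr rfl this, ← Finset.mul_sum, ih,
      Finset.card_insert_of_notMem ha, pow_succ]
    ring

private lemma sum_pow_erase {β : Type*} [DecidableEq β] (s : Finset β) (y : ℝ) :
    ∑ B ∈ s.powerset.erase ∅, (y - 1) ^ (B.card - 1) = ∑ i ∈ Finset.range s.card, y ^ i := by
  induction s using Finset.induction_on with
  | empty => simp
  | @insert a s ha ih =>
    have hdisj : Disjoint (s.powerset.erase ∅) (s.powerset.image (insert a)) := by
      rw [Finset.disjoint_left]
      rintro B hB hB'
      obtain ⟨C, hC, rfl⟩ := Finset.mem_image.1 hB'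
      exact ha (Finset.mem_powerset.1 (Finset.mem_of_mem_erase hB) (Finset.mem_insert_self a C))
    have hne : (∅ : Finset β) ∉ s.powerset.image (insert a) := by
      simp only [Finset.mem_image]
      rintro ⟨C, hC, h⟩
      exact (Finset.insert_ne_empty a C) h
    rw [Finset.powerset_insert, Finset.erase_union_distrib,
      Finset.erase_eq_of_notMem hne, Finset.sum_union hdisj, ih, Finset.sum_image (by
        intro x hx y hy h
        have hax : a ∉ x := fun h' => ha (Finset.mem_powerset.1 hx h')
        have hay : a ∉ y := fun h' => ha (Finset.mem_powerset.1 hy h')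
        rw [← Finset.erase_insert hax, h, Finset.erase_insert hay])]
    have : ∀ C ∈ s.powerset, (y - 1) ^ ((insert a C).card - 1) = (y - 1) ^ C.card := by
      intro C hC
      rw [Finset.card_insert_of_notMem (fun h' => ha (Finset.mem_powerset.1 hC h'))]
      simp
    rw [Finset.sum_congr rfl this, sum_pow_card'', Finset.card_insert_of_notMem ha,
      Finset.sum_range_succ]
    ring_nf

private lemma tutte_formula {α : Type*} [Fintype α] (M : Matroid α)
    (k l : ℕ) (hk : 1 ≤ k) (P L : Set α)
    (hE : M.E = P ∪ L) (hPL : Disjoint P L)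
    (hP : P.ncard = k + 1) (hL : L.ncard = l)
    (hIndep : ∀ I, M.Indep I ↔ I ⊆ P ∧ I.ncard ≤ 1) :
    ∀ x y : ℝ, M.tutte x y = ((x - 1) + ∑ i ∈ Finset.range (k + 1), y ^ i) * y ^ l := by
  classical
  -- rank computation
  have hr : ∀ A : Set α, M.rankSet A = if (A ∩ P).Nonempty then 1 else 0 := by
    intro A
    have h0 : 0 ∈ {n | ∃ I ⊆ A, M.Indep I ∧ I.ncard = n} :=
      ⟨∅, Set.empty_subset A, (hIndep ∅).2 ⟨Set.empty_subset P, by simp⟩, by simp⟩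
    have hub : ∀ n ∈ {n | ∃ I ⊆ A, M.Indep I ∧ I.ncard = n}, n ≤ 1 := by
      rintro n ⟨I, hIA, hI, rfl⟩
      exact ((hIndep I).1 hI).2
    unfold Matroid.rankSet
    split_ifs with h
    · refine le_antisymm (csSup_le ⟨0, h0⟩ hub) (le_csSup ⟨1, hub⟩ ?_)
      obtain ⟨a, haA, haP⟩ := h
      exact ⟨{a}, Set.singleton_subset_iff.2 haA,
        (hIndep {a}).2 ⟨Set.singleton_subset_iff.2 haP, by simp⟩, by simp⟩
    · have : sSup {n | ∃ I ⊆ A, M.Indep I ∧ I.ncard = n} ≤ 0 := by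
        refine csSup_le ⟨0, h0⟩ ?_
        rintro n ⟨I, hIA, hI, rfl⟩
        rcases I.eq_empty_or_nonempty with rfl | ⟨a, haI⟩
        · simp
        · exact absurd ⟨a, hIA haI, ((hIndep I).1 hI).1 haI⟩ h
      omega
  have hPne : P.Nonempty := Set.nonempty_of_ncard_ne_zero (by omega)
  have hrE : M.rankSet M.E = 1 := by
    rw [hr]
    have : (M.E ∩ P).Nonempty := by
      obtain ⟨a, ha⟩ := hPne
      exact ⟨a, hE ▸ Or.inl ha, ha⟩
    simp [this]
  intro x y
  unfold Matroid.tutte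
  rw [hrE]
  have hPf : P.Finite := Set.toFinite P
  have hLfin : L.Finite := Set.toFinite L
  set Pf := hPf.toFinset with hPfdef
  set Lf := hLfin.toFinset with hLfdef
  have hEf : M.E.toFinite.toFinset = Pf ∪ Lf := by
    ext a
    simp only [Set.Finite.mem_toFinset, Finset.mem_union, hPfdef, hLfdef, hE, Set.mem_union]
  have hPfcard : Pf.card = k + 1 := by
    rw [← hP, Set.ncard_eq_toFinset_card P hPf]
  have hLfcard : Lf.card = l := by
    rw [← hL, Set.ncard_eq_toFinset_card L hLfin]
  have hdisj : Disjoint Pf Lf := by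
    rw [Finset.disjoint_left]
    intro a h1 h2
    exact Set.disjoint_left.1 hPL (hPf.mem_toFinset.1 h1) (hLfin.mem_toFinset.1 h2)
  rw [hEf]
  -- reindex the powerset of the union by pairs of subsets
  rw [Finset.sum_nbij' (i := fun A => (A ∩ Pf, A ∩ Lf)) (j := fun p => p.1 ∪ p.2)
    (t := Pf.powerset ×ˢ Lf.powerset)
    (g := fun p => (x - 1) ^ (1 - M.rankSet ↑(p.1 ∪ p.2)) *
      (y - 1) ^ ((p.1 ∪ p.2).card - M.rankSet ↑(p.1 ∪ p.2)))
    (by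
      intro A hA
      rw [Finset.mem_powerset] at hA
      simp only [Finset.mem_product, Finset.mem_powerset]
      constructor <;> [exact Finset.inter_subset_right; exact Finset.inter_subset_right])
    (by
      intro p hp
      rw [Finset.mem_product, Finset.mem_powerset, Finset.mem_powerset] at hp
      rw [Finset.mem_powerset]
      exact Finset.union_subset_union hp.1 hp.2)
    (by
      intro A hA
      rw [Finset.mem_powerset] at hA
      simp only
      rw [← Finset.inter_union_distrib_left]
      exact Finset.inter_eq_left.2 hA)
    (by
      rintro ⟨B, C⟩ hp
      simp only [Finset.mem_product, Finset.mem_powerset] at hp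
      obtain ⟨hB, hC⟩ := hp
      have h1 : (B ∪ C) ∩ Pf = B := by
        rw [Finset.union_inter_distrib_right, Finset.inter_eq_left.2 hB,
          Finset.disjoint_iff_inter_eq_empty.1 (Finset.disjoint_of_subset_left hC hdisj.symm), Finset.union_empty]
      have h2 : (B ∪ C) ∩ Lf = C := by
        rw [Finset.union_inter_distrib_right, Finset.inter_eq_left.2 hC,
          Finset.disjoint_iff_inter_eq_empty.1 (Finset.disjoint_of_subset_left hB hdisj), Finset.empty_union]
      simp [h1, h2])
    (by
      intro A hA
      simp only
      rw [Finset.mem_powerset] at hA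
      congr 2 <;> rw [← Finset.inter_union_distrib_left, Finset.inter_eq_left.2 hA])]
  rw [Finset.sum_product]
  have hterm : ∀ B ∈ Pf.powerset,
      (∑ C ∈ Lf.powerset, (x - 1) ^ (1 - M.rankSet ↑(B ∪ C)) *
        (y - 1) ^ ((B ∪ C).card - M.rankSet ↑(B ∪ C)))
      = (if B = ∅ then (x - 1) else (y - 1) ^ (B.card - 1)) * y ^ l := by
    intro B hB
    rw [Finset.mem_powerset] at hB
    have hrank : ∀ C, C ⊆ Lf → M.rankSet ↑(B ∪ C) = if B.Nonempty then 1 else 0 := by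
      intro C hC
      rw [hr]
      have hBP : (↑B : Set α) ⊆ P := fun a ha => hPf.mem_toFinset.1 (hB ha)
      have hCP : Disjoint (↑C : Set α) P :=
        hPL.symm.mono_left (fun a ha => hLfin.mem_toFinset.1 (hC ha))
      have hint : (↑(B ∪ C) : Set α) ∩ P = ↑B := by
        rw [Finset.coe_union, Set.union_inter_distrib_right, Set.inter_eq_left.2 hBP,
          hCP.inter_eq, Set.union_empty]
      rw [hint]
      simp [Finset.coe_nonempty]
    have hcard : ∀ C, C ⊆ Lf → (B ∪ C).card = B.card + C.card := fun C hC =>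
      Finset.card_union_of_disjoint
        (Finset.disjoint_of_subset_right hC (Finset.disjoint_of_subset_left hB hdisj))
    rcases B.eq_empty_or_nonempty with rfl | hBne
    · rw [if_pos rfl]
      have hc : ∀ C ∈ Lf.powerset, (x - 1) ^ (1 - M.rankSet ↑(∅ ∪ C)) *
          (y - 1) ^ ((∅ ∪ C).card - M.rankSet ↑(∅ ∪ C)) = (x - 1) * (y - 1) ^ C.card := by
        intro C hC
        rw [hrank C (Finset.mem_powerset.1 hC)]
        simp
      rw [Finset.sum_congr rfl hc, ← Finset.mul_sum, sum_pow_card'', hLfcard]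
      ring_nf
    · rw [if_neg hBne.ne_empty]
      have hB1 : 1 ≤ B.card := Finset.card_pos.2 hBne
      have hc : ∀ C ∈ Lf.powerset, (x - 1) ^ (1 - M.rankSet ↑(B ∪ C)) *
          (y - 1) ^ ((B ∪ C).card - M.rankSet ↑(B ∪ C))
          = (y - 1) ^ (B.card - 1) * (y - 1) ^ C.card := by
        intro C hC
        rw [hrank C (Finset.mem_powerset.1 hC), if_pos hBne, hcard C (Finset.mem_powerset.1 hC)]
        have he : B.card + C.card - 1 = (B.card - 1) + C.card := by omega
        rw [he, pow_add]
        simp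
      rw [Finset.sum_congr rfl hc, ← Finset.mul_sum, sum_pow_card'', hLfcard]
      ring_nf
  rw [Finset.sum_congr rfl hterm, ← Finset.sum_mul]
  congr 1
  rw [← Finset.insert_erase (Finset.empty_mem_powerset Pf),
    Finset.sum_insert (Finset.notMem_erase _ _), if_pos rfl]
  congr 1
  rw [Finset.sum_congr rfl (fun B hB => if_neg (Finset.ne_of_mem_erase hB)),
    sum_pow_erase, hPfcard]

/-- If `M` is the direct sum of the uniform matroid `U_{1,k+1}` (with `k ≥ 1`) and the
uniform matroid `U_{0,l}` — i.e. a rank-1 matroid consisting of a parallel class `P` of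
`k+1` elements together with a set `L` of `l` loops — then `T_M` is convex along the
portions of the lines `x + y = p` lying in the positive quadrant. -/
theorem tutteConvexOnLines_parallel_class_plus_loops [Fintype α] (M : Matroid α)
    (k l : ℕ) (hk : 1 ≤ k) (P L : Set α)
    (hE : M.E = P ∪ L) (hPL : Disjoint P L)
    (hP : P.ncard = k + 1) (hL : L.ncard = l)
    (hIndep : ∀ I, M.Indep I ↔ I ⊆ P ∧ I.ncard ≤ 1) :
    M.TutteConvexOnLines := by
  have key := tutte_formula M k l hk P L hE hPL hP hL hIndep
  obtain ⟨m, rfl⟩ : ∃ m, k = m + 1 := ⟨k - 1, by omega⟩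
  have key2 : ∀ x y p : ℝ, x + y = p →
      M.tutte x y = p * y ^ l + ∑ j ∈ Finset.range m, y ^ (j + 2 + l) := by
    intro x y p hxy
    rw [key x y]
    have hsplit : ∑ i ∈ Finset.range (m + 1 + 1), y ^ i
        = 1 + y + ∑ j ∈ Finset.range m, y ^ (j + 2) := by
      rw [Finset.sum_range_succ', Finset.sum_range_succ']
      have he : ∑ j ∈ Finset.range m, y ^ (j + 1 + 1) = ∑ j ∈ Finset.range m, y ^ (j + 2) :=
        Finset.sum_congr rfl fun j _ => by ring
      rw [he]
      ring
    rw [hsplit]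
    have hS : (∑ j ∈ Finset.range m, y ^ (j + 2)) * y ^ l
        = ∑ j ∈ Finset.range m, y ^ (j + 2 + l) := by
      rw [Finset.sum_mul]
      exact Finset.sum_congr rfl fun j _ => by rw [← pow_add]
    calc (x - 1 + (1 + y + ∑ j ∈ Finset.range m, y ^ (j + 2))) * y ^ l
        = p * y ^ l + (∑ j ∈ Finset.range m, y ^ (j + 2)) * y ^ l := by rw [← hxy]; ring
      _ = _ := by rw [hS]
  intro t x₁ y₁ x₂ y₂ ht ht1 hx₁ hy₁ hx₂ hy₂ hsum
  have hp0 : 0 ≤ x₁ + y₁ := add_nonneg hx₁ hy₁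
  have hmid : t * x₁ + (1 - t) * x₂ + (t * y₁ + (1 - t) * y₂) = x₁ + y₁ := by
    linear_combination (t - 1) * hsum
  rw [key2 x₁ y₁ (x₁ + y₁) rfl, key2 x₂ y₂ (x₁ + y₁) hsum.symm,
    key2 _ _ (x₁ + y₁) hmid]
  have hpow : ∀ n : ℕ, (t * y₁ + (1 - t) * y₂) ^ n ≤ t * y₁ ^ n + (1 - t) * y₂ ^ n := by
    intro n
    have h := (convexOn_pow (𝕜 := ℝ) n).2 (Set.mem_Ici.2 hy₁) (Set.mem_Ici.2 hy₂)
      (show (0:ℝ) ≤ t from ht) (show (0:ℝ) ≤ 1 - t by linarith) (show t + (1 - t) = 1 by ring)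
    simpa using h
  have h1 : (x₁ + y₁) * (t * y₁ + (1 - t) * y₂) ^ l ≤ (x₁ + y₁) * (t * y₁ ^ l + (1 - t) * y₂ ^ l) :=
    mul_le_mul_of_nonneg_left (hpow l) hp0
  have h2 : ∑ j ∈ Finset.range m, (t * y₁ + (1 - t) * y₂) ^ (j + 2 + l)
      ≤ ∑ j ∈ Finset.range m, (t * y₁ ^ (j + 2 + l) + (1 - t) * y₂ ^ (j + 2 + l)) :=
    Finset.sum_le_sum fun j _ => hpow _
  have h3 : t * ((x₁ + y₁) * y₁ ^ l + ∑ j ∈ Finset.range m, y₁ ^ (j + 2 + l))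
      + (1 - t) * ((x₁ + y₁) * y₂ ^ l + ∑ j ∈ Finset.range m, y₂ ^ (j + 2 + l))
      = (x₁ + y₁) * (t * y₁ ^ l + (1 - t) * y₂ ^ l)
        + ∑ j ∈ Finset.range m, (t * y₁ ^ (j + 2 + l) + (1 - t) * y₂ ^ (j + 2 + l)) := by
    rw [Finset.sum_add_distrib, ← Finset.mul_sum, ← Finset.mul_sum]
    ring
  rw [h3]
  exact add_le_add h1 h2
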